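/- For δ_1 > 2, the condition r_1⌈(Δ−1)/(δ_1−1)⌉ + (Δ−1) < n_1 with Δ = ⌈n_1/(r_1+δ_1−1)⌉(δ_1−1) holds if and only if (r_1+δ_1−1) divides n_1 (assuming n_1 ≥ 1, r_1 ≥ 1). -/
import Mathlib


open scoped Classical

/-- `R` is a regenerating set of coordinate `i` for the code with generator matrix `G`:
`i ∈ R` and the `i`-th column of `G` is a linear combination of the columns indexed by `R \ {i}`. -/
def regenSet {𝔽 : Type*} [Field 𝔽] {m n : ℕ} (G : Matrix (Fin m) (Fin n) 𝔽)
    (i : Fin n) (R : Finset (Fin n)) : Prop :=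
  i ∈ R ∧ (fun t => G t i) ∈ Submodule.span 𝔽 ((fun j => fun t => G t j) '' ↑(R.erase i))

/-- A sequence of regenerating sets `R j` of coordinates `l j` with a nontrivial union. -/
def ntUnion {𝔽 : Type*} [Field 𝔽] {m n : ℕ} (G : Matrix (Fin m) (Fin n) 𝔽) (x : ℕ)
    (l : Fin x → Fin n) (R : Fin x → Finset (Fin n)) : Prop :=
  (∀ j, regenSet G (l j) (R j)) ∧ ∀ j j' : Fin x, j' < j → l j ∉ R j'

/-- `Φ(x)`: minimum size of the union of `x` regenerating sets having a nontrivial union. -/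
noncomputable def Phi {𝔽 : Type*} [Field 𝔽] {m n : ℕ} (G : Matrix (Fin m) (Fin n) 𝔽)
    (x : ℕ) : ℕ :=
  sInf {c | ∃ (l : Fin x → Fin n) (R : Fin x → Finset (Fin n)),
    ntUnion G x l R ∧ (Finset.univ.biUnion R).card = c}

/-- `ρ = max { x : Φ(x) − x < k }` (over those `x` where `Φ` is defined). -/
noncomputable def rho {𝔽 : Type*} [Field 𝔽] {m n : ℕ} (G : Matrix (Fin m) (Fin n) 𝔽)
    (k : ℕ) : ℕ :=
  sSup {x | (∃ (l : Fin x → Fin n) (R : Fin x → Finset (Fin n)), ntUnion G x l R) ∧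
    Phi G x - x < k}

/-- The linear code generated by the rows of `G`. -/
def rowCode {𝔽 : Type*} [Field 𝔽] {m n : ℕ} (G : Matrix (Fin m) (Fin n) 𝔽) :
    Submodule 𝔽 (Fin n → 𝔽) :=
  Submodule.span 𝔽 (Set.range fun t => G t)

/-- Hamming weight of a vector. -/
noncomputable def wt {𝔽 : Type*} [Field 𝔽] {n : ℕ} (c : Fin n → 𝔽) : ℕ :=
  (Finset.univ.filter fun j => c j ≠ 0).card

/-- Minimum (Hamming) distance of a linear code. -/
noncomputable def minDist {𝔽 : Type*} [Field 𝔽] {n : ℕ} (C : Submodule 𝔽 (Fin n → 𝔽)) : ℕ :=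
  sInf {w | ∃ c ∈ C, c ≠ 0 ∧ wt c = w}

/-- Membership in the dual code `C⊥`. -/
def inDual {𝔽 : Type*} [Field 𝔽] {n : ℕ} (C : Submodule 𝔽 (Fin n → 𝔽))
    (e : Fin n → 𝔽) : Prop :=
  ∀ c ∈ C, ∑ j, e j * c j = 0

/-- Ceiling of natural division: `cdiv a b = ⌈a / b⌉`. -/
def cdiv (a b : ℕ) : ℕ := (a + b - 1) / b

/-- All coordinates in `T` have `(r, δ)`-locality (Definition 3.1/3.2). -/
def hasLocality {𝔽 : Type*} [Field 𝔽] {m n : ℕ} (G : Matrix (Fin m) (Fin n) 𝔽)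
    (T : Finset (Fin n)) (r δ : ℕ) : Prop :=
  ∀ ι ∈ T, ∃ S ⊆ T, ι ∈ S ∧ δ ≤ S.card ∧ S.card ≤ r + δ - 1 ∧
    ∀ E ⊆ S, E.card = δ - 1 → ∀ j ∈ E, regenSet G j ((S \ E) ∪ {j})
/-- for `δ₁ > 2`, the condition `r₁⌈(Δ−1)/(δ₁−1)⌉ + (Δ−1) < n₁` with
`Δ = ⌈n₁/(r₁+δ₁−1)⌉(δ₁−1)` holds iff `(r₁+δ₁−1) ∣ n₁`. -/
theorem condition_iff_dvd (n₁ r₁ δ₁ : ℕ) (hn : 1 ≤ n₁) (hr : 1 ≤ r₁) (hδ : 2 < δ₁) :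
    (r₁ * cdiv (cdiv n₁ (r₁ + δ₁ - 1) * (δ₁ - 1) - 1) (δ₁ - 1)
        + (cdiv n₁ (r₁ + δ₁ - 1) * (δ₁ - 1) - 1) < n₁)
      ↔ (r₁ + δ₁ - 1) ∣ n₁ := by
  set d : ℕ := δ₁ - 1 with hd
  set s : ℕ := r₁ + δ₁ - 1 with hs
  set q : ℕ := cdiv n₁ s with hqdef
  have hd2 : 2 ≤ d := by omega
  have hsd : s = r₁ + d := by omega
  have hq1 : 1 ≤ q := by
    rw [hqdef]; unfold cdiv
    rw [Nat.le_div_iff_mul_le (by omega)]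
    omega
  have hdq : d ≤ q * d := Nat.le_mul_of_pos_left d hq1
  have hlow : n₁ ≤ q * s := by
    have h := Nat.div_add_mod (n₁ + s - 1) s
    have h2 : (n₁ + s - 1) % s < s := Nat.mod_lt _ (by omega)
    have h3 : q * s = s * ((n₁ + s - 1) / s) := by
      rw [hqdef]; unfold cdiv; ring
    omega
  have hup : q * s ≤ n₁ + s - 1 := by
    rw [hqdef]; unfold cdiv
    exact Nat.div_mul_le_self _ _
  have hceil : cdiv (q * d - 1) d = q := by
    unfold cdiv
    have h1 : q * d - 1 + d - 1 = d * q + (d - 2) := by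
      have : q * d = d * q := Nat.mul_comm _ _
      omega
    rw [h1, Nat.mul_add_div (by omega), Nat.div_eq_of_lt (by omega)]
    omega
  rw [hceil]
  have hqs : q * s = r₁ * q + q * d := by rw [hsd]; ring
  have hcomm : q * s = s * q := Nat.mul_comm _ _
  clear_value d s q
  constructor
  · intro h
    exact ⟨q, by omega⟩
  · intro hdvd
    have hdvd2 : s ∣ q * s := Dvd.intro_left q rfl
    have hsub : s ∣ q * s - n₁ := Nat.dvd_sub hdvd2 hdvd
    have hz : q * s - n₁ = 0 := Nat.eq_zero_of_dvd_of_lt hsub (by omega) 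
    omega
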